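/- Let 𝕊 ⊂ ℤ be Nℤ-periodic and 𝕊_N = 𝕊 ∩ {0,...,N−1}. With qN = pM, gcd(p,q)=1, and 𝒦_j = {k ∈ {0,...,p−1} : j+kM ∈ 𝕊}, one has for all j ∈ ℤ: card(𝒦_j) = Σ_{n∈ℤ} χ_{𝕊_N}(j + (M/q)·n). In particular, j ↦ card(𝒦_j) is (M/q)-periodic. -/

import Mathlib

open scoped Classical
/-- For an `Nℤ`-periodic set `𝕊` with `qN = pM`, `gcd(p,q) = 1`:
`card 𝒦_j = Σ_{n∈ℤ} χ_{𝕊_N}(j + (M/q)·n)` for every `j`, and in particular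
`j ↦ card 𝒦_j` is `(M/q)`-periodic. -/
theorem stmt10 (M N p q : ℕ) (hM : 0 < M) (hN : 0 < N) (hp : 0 < p) (hq : 0 < q)
    (hpq : Nat.Coprime p q) (hMN : q * N = p * M)
    (S : Set ℤ) (hper : ∀ j ∈ S, ∀ n : ℤ, j + n * N ∈ S) :
    (∀ j : ℤ,
      ((Nat.card {k : Fin p // j + (k : ℕ) * (M : ℤ) ∈ S}) : ℝ) =
        ∑' n : ℤ, (if j + ((M / q : ℕ) : ℤ) * n ∈ S ∩ Set.Ico (0 : ℤ) (N : ℤ)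
          then (1 : ℝ) else 0)) ∧
    (∀ j : ℤ,
      Nat.card {k : Fin p // j + ((M / q : ℕ) : ℤ) + (k : ℕ) * (M : ℤ) ∈ S} =
        Nat.card {k : Fin p // j + (k : ℕ) * (M : ℤ) ∈ S}) := by
  -- Extract L = M / q
  obtain ⟨L, hL⟩ : ∃ L, M = q * L := by
    have h1 : q ∣ p * M := ⟨N, hMN.symm⟩
    exact hpq.symm.dvd_of_dvd_mul_left h1
  have hMq : M / q = L := by rw [hL]; exact Nat.mul_div_cancel_left L hq
  have hL0 : 0 < L := by
    rcases Nat.eq_zero_or_pos L with h | h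
    · subst h; simp at hL; omega
    · exact h
  have hNL : N = p * L := by
    apply Nat.eq_of_mul_eq_mul_left hq
    rw [hMN, hL]; ring
  have hNz : (0:ℤ) < (N:ℤ) := by exact_mod_cast hN
  have hpz : (0:ℤ) < (p:ℤ) := by exact_mod_cast hp
  have hNpl : (N:ℤ) = (p:ℤ) * (L:ℤ) := by exact_mod_cast hNL
  have hMql : (M:ℤ) = (q:ℤ) * (L:ℤ) := by exact_mod_cast hL
  have hcop : IsCoprime (p:ℤ) (q:ℤ) := by
    rw [Int.isCoprime_iff_gcd_eq_one]
    exact_mod_cast hpq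
  simp only [hMq]
  -- the key cardinality identity
  have key : ∀ j : ℤ, Nat.card {k : Fin p // j + (k : ℕ) * (M : ℤ) ∈ S}
      = Nat.card {n : ℤ // j + (L:ℤ) * n ∈ S ∩ Set.Ico (0:ℤ) (N:ℤ)} := by
    intro j
    apply Nat.card_congr
    set g : ℤ → ℤ := fun c => c * q - p * ((j + (L:ℤ) * (c * q)) / N) with hg
    have hgval : ∀ c : ℤ, j + (L:ℤ) * g c = (j + (L:ℤ) * (c * q)) % (N:ℤ) := by
      intro c
      simp only [hg, Int.emod_def, hNpl]; ring
    have hmemS : ∀ c : ℤ, j + c * (M:ℤ) ∈ S →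
        j + (L:ℤ) * g c ∈ S ∩ Set.Ico (0:ℤ) (N:ℤ) := by
      intro c hc
      rw [hgval c]
      constructor
      · have h2 : (j + (L:ℤ) * (c * q)) % (N:ℤ)
            = (j + c * M) + (-((j + (L:ℤ) * (c * q)) / N)) * N := by
          rw [Int.emod_def, hMql]; ring
        rw [h2]
        exact hper _ hc _
      · exact ⟨Int.emod_nonneg _ (ne_of_gt hNz), Int.emod_lt_of_pos _ hNz⟩
    refine Equiv.ofBijective
      (fun k => ⟨g ((k.1 : ℕ) : ℤ), hmemS _ k.2⟩) ⟨?_, ?_⟩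
    · -- injective
      rintro ⟨k1, hs1⟩ ⟨k2, hs2⟩ hEq
      have hval : g ((k1 : ℕ) : ℤ) = g ((k2 : ℕ) : ℤ) := congrArg Subtype.val hEq
      simp only [hg] at hval
      have h1 : (((k1:ℕ):ℤ) - ((k2:ℕ):ℤ)) * q
          = p * ((j + (L:ℤ) * (((k1:ℕ):ℤ) * q)) / N - (j + (L:ℤ) * (((k2:ℕ):ℤ) * q)) / N) := by
        linear_combination hval
      have h2 : (p:ℤ) ∣ (((k1:ℕ):ℤ) - ((k2:ℕ):ℤ)) :=
        hcop.dvd_of_dvd_mul_right ⟨_, h1⟩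
      have hb1 : ((k1:ℕ):ℤ) < p := by exact_mod_cast k1.isLt
      have hb2 : ((k2:ℕ):ℤ) < p := by exact_mod_cast k2.isLt
      have h3 : (((k1:ℕ):ℤ) - ((k2:ℕ):ℤ)) = 0 := by
        refine Int.eq_zero_of_abs_lt_dvd h2 ?_
        rw [abs_lt]
        constructor
        · have : (0:ℤ) ≤ ((k1:ℕ):ℤ) := Int.natCast_nonneg _
          linarith
        · have : (0:ℤ) ≤ ((k2:ℕ):ℤ) := Int.natCast_nonneg _
          linarith
      apply Subtype.ext
      apply Fin.ext
      have : ((k1:ℕ):ℤ) = ((k2:ℕ):ℤ) := by linarith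
      exact_mod_cast this
    · -- surjective
      rintro ⟨n, hnS, hn0, hnN⟩
      obtain ⟨u, v, huv⟩ := hcop
      set m : ℤ := -(n * u) - ((n * v) / p) * q with hm
      set k0 : ℤ := (n * v) % p with hk0
      have hk0q : k0 * q = n + p * m := by
        rw [hk0, Int.emod_def, hm]
        linear_combination n * huv
      have hk0nn : 0 ≤ k0 := Int.emod_nonneg _ (ne_of_gt hpz)
      have hk0lt : k0 < p := Int.emod_lt_of_pos _ hpz
      have hfin : k0.toNat < p := by omega
      have hcast : ((k0.toNat : ℕ) : ℤ) = k0 := Int.toNat_of_nonneg hk0nn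
      have hmem : j + ((k0.toNat : ℕ) : ℤ) * M ∈ S := by
        rw [hcast]
        have h4 : j + k0 * M = (j + (L:ℤ) * n) + m * N := by
          rw [hMql, hNpl]; linear_combination (L:ℤ) * hk0q
        rw [h4]
        exact hper _ hnS m
      refine ⟨⟨⟨k0.toNat, hfin⟩, hmem⟩, ?_⟩
      apply Subtype.ext
      show g ((k0.toNat : ℕ) : ℤ) = n
      rw [hcast]
      simp only [hg]
      have hx : j + (L:ℤ) * (k0 * q) = (j + (L:ℤ) * n) + (N:ℤ) * m := by
        rw [hNpl]; linear_combination (L:ℤ) * hk0q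
      rw [hx]
      have hdiv : ((j + (L:ℤ) * n) + (N:ℤ) * m) / N = m := by
        rw [Int.add_mul_ediv_left _ _ (ne_of_gt hNz), Int.ediv_eq_zero_of_lt hn0 hnN]
        ring
      rw [hdiv]
      linarith [hk0q]
  -- tsum evaluation
  have htsum : ∀ j : ℤ,
      (∑' n : ℤ, (if j + (L:ℤ) * n ∈ S ∩ Set.Ico (0:ℤ) (N:ℤ) then (1:ℝ) else 0))
        = (Nat.card {n : ℤ // j + (L:ℤ) * n ∈ S ∩ Set.Ico (0:ℤ) (N:ℤ)} : ℝ) := by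
    intro j
    have h1 : ∀ n : ℤ, (if j + (L:ℤ) * n ∈ S ∩ Set.Ico (0:ℤ) (N:ℤ) then (1:ℝ) else 0)
        = Set.indicator {n : ℤ | j + (L:ℤ) * n ∈ S ∩ Set.Ico (0:ℤ) (N:ℤ)}
            (fun _ => (1:ℝ)) n := by
      intro n; simp [Set.indicator_apply]
    rw [tsum_congr h1, ← tsum_subtype, tsum_const]
    simp
    rw [← Nat.card_coe_set_eq]; rfl
  constructor
  · intro j
    rw [key j, htsum j]
  · intro j
    rw [key (j + (L:ℤ)), key j]
    exact Nat.card_congr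
      { toFun := fun n => ⟨n.1 + 1, by
          have h := n.2
          rwa [show j + (L:ℤ) * (n.1 + 1) = j + (L:ℤ) + (L:ℤ) * n.1 from by ring]⟩
        invFun := fun n => ⟨n.1 - 1, by
          have h := n.2
          rwa [show j + (L:ℤ) + (L:ℤ) * (n.1 - 1) = j + (L:ℤ) * n.1 from by ring]⟩
        left_inv := fun n => Subtype.ext (by simp)
        right_inv := fun n => Subtype.ext (by simp) }
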